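/- Let V(x) = |x|^2 on the reals. If a tamed drift b^h and tamed diffusion σ^h satisfy |b^h(x)|^2 h ≤ μ(1+V(x)) and 2x·b^h(x) + |σ^h(x)|^2 ≤ ρ(1+V(x)) for all x ∈ ℝ, then the Euler iterates X_{k+1} = X_k + b^h(X_k)h + σ^h(X_k)ΔW_{k+1} (with ΔW_{k+1} a centered Gaussian increment of variance h, independent of X_k) satisfy E[1+V(X_{k+1})] ≤ (1+(ρ+μ)h) E[1+V(X_k)], and consequently E[V(X_k)] ≤ e^{(ρ+μ)T} E[1+V(X_0)] for all 0 ≤ k ≤ ⌊T/h⌋. -/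

import Mathlib

open MeasureTheory ProbabilityTheory Real Set Filter
open scoped NNReal ENNReal

lemma int_sq_exp (b : ℝ) (hb : 0 < b) :
    Integrable (fun x : ℝ => x ^ 2 * Real.exp (-b * x ^ 2)) := by
  have := integrable_rpow_mul_exp_neg_mul_sq hb (by norm_num : (-1:ℝ) < 2)
  convert this using 2 with x
  rw [← Real.rpow_natCast x 2]; norm_num

lemma gauss_sq_Ioi (b : ℝ) (hb : 0 < b) :
    ∫ x : ℝ in Set.Ioi 0, x ^ 2 * Real.exp (-b * x ^ 2)
      = (2*b)⁻¹ * (Real.sqrt (π / b) / 2) := by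
  set f : ℝ → ℝ := fun y => -(y * Real.exp (-b * y ^ 2)) / (2*b) with hf
  have key : ∀ x : ℝ, HasDerivAt f
      (x ^ 2 * Real.exp (-b * x ^ 2) - Real.exp (-b * x ^ 2) / (2*b)) x := by
    intro x
    have h1 : HasDerivAt (fun y : ℝ => -b * y ^ 2) (-b * (2*x)) x := by
      simpa using ((hasDerivAt_pow 2 x).const_mul (-b))
    have h2 : HasDerivAt (fun y : ℝ => Real.exp (-b * y ^ 2))
        (Real.exp (-b * x ^ 2) * (-b * (2*x))) x := h1.exp
    have h3 : HasDerivAt (fun y : ℝ => y * Real.exp (-b * y ^ 2))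
        (1 * Real.exp (-b * x ^ 2) + x * (Real.exp (-b * x ^ 2) * (-b * (2*x)))) x :=
      (hasDerivAt_id x).mul h2
    have h4 := (h3.neg).div_const (2*b)
    have h2b : (2*b) ≠ 0 := by positivity
    refine h4.congr_deriv ?_
    rw [eq_comm, eq_div_iff h2b, sub_mul, div_mul_cancel₀ _ h2b]; ring
  have hint1 : IntegrableOn (fun x : ℝ => x ^ 2 * Real.exp (-b * x ^ 2)) (Ioi 0) :=
    (int_sq_exp b hb).integrableOn
  have hint2 : IntegrableOn (fun x : ℝ => Real.exp (-b * x ^ 2) / (2*b)) (Ioi 0) :=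
    ((integrable_exp_neg_mul_sq hb).div_const _).integrableOn
  have htend : Tendsto f atTop (nhds 0) := by
    have h0 : Tendsto (fun y : ℝ => y * Real.exp (-b * y ^ 2)) atTop (nhds 0) := by
      have hlo := rpow_mul_exp_neg_mul_sq_isLittleO_exp_neg hb 1
      have hlo' : (fun y : ℝ => y * Real.exp (-b * y ^ 2)) =o[atTop]
          fun x : ℝ => Real.exp (-(1/2) * x) := by
        refine hlo.congr' ?_ EventuallyEq.rfl
        filter_upwards [eventually_gt_atTop (0:ℝ)] with y hy
        rw [Real.rpow_one]
      refine hlo'.trans_tendsto ?_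
      have h2 : Tendsto (fun x : ℝ => Real.exp (-(x / 2))) atTop (nhds 0) :=
        tendsto_exp_neg_atTop_nhds_zero.comp (tendsto_id.atTop_div_const (by norm_num))
      refine h2.congr fun x => by congr 1; ring
    have h5 := (h0.neg).div_const (2*b)
    simp only [hf]
    simpa using h5
  have hder := integral_Ioi_of_hasDerivAt_of_tendsto' (f' := fun x =>
      x ^ 2 * Real.exp (-b * x ^ 2) - Real.exp (-b * x ^ 2) / (2*b))
    (fun x _ => key x) (hint1.sub hint2) htend
  have hf0 : f 0 = 0 := by simp [hf]
  rw [hf0, sub_zero] at hder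
  have hsplit : ∫ x : ℝ in Ioi 0, (x ^ 2 * Real.exp (-b * x ^ 2) - Real.exp (-b * x ^ 2) / (2*b))
      = (∫ x : ℝ in Ioi 0, x ^ 2 * Real.exp (-b * x ^ 2))
        - ∫ x : ℝ in Ioi 0, Real.exp (-b * x ^ 2) / (2*b) := integral_sub hint1 hint2
  have hgauss : ∫ x : ℝ in Ioi 0, Real.exp (-b * x ^ 2) = Real.sqrt (π / b) / 2 := by
    simpa using integral_gaussian_Ioi b
  rw [hsplit] at hder
  have : ∫ x : ℝ in Ioi 0, Real.exp (-b * x ^ 2) / (2*b) = (Real.sqrt (π / b) / 2) / (2*b) := by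
    rw [integral_div, hgauss]
  rw [this] at hder
  have := sub_eq_zero.mp hder
  rw [this]; ring

lemma gauss_sq_full (b : ℝ) (hb : 0 < b) :
    ∫ x : ℝ, x ^ 2 * Real.exp (-b * x ^ 2) = (2*b)⁻¹ * Real.sqrt (π / b) := by
  have hsplit := intervalIntegral.integral_Iic_add_Ioi (μ := volume) (b := (0:ℝ))
    (int_sq_exp b hb).integrableOn (int_sq_exp b hb).integrableOn
  have hIic : ∫ x : ℝ in Iic 0, x ^ 2 * Real.exp (-b * x ^ 2)
      = ∫ x : ℝ in Ioi 0, x ^ 2 * Real.exp (-b * x ^ 2) := by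
    rw [show ∫ x : ℝ in Ioi 0, x ^ 2 * Real.exp (-b * x ^ 2)
        = ∫ x : ℝ in Ioi (-(0:ℝ)), x ^ 2 * Real.exp (-b * x ^ 2) by norm_num,
      ← integral_comp_neg_Iic (0:ℝ) (fun x => x ^ 2 * Real.exp (-b * x ^ 2))]
    simp
  rw [hIic, gauss_sq_Ioi b hb] at hsplit
  rw [← hsplit]; ring

lemma gaussianReal_integral_eq (v : ℝ≥0) (hv : v ≠ 0) (g : ℝ → ℝ) :
    ∫ x, g x ∂(gaussianReal 0 v) = ∫ x, gaussianPDFReal 0 v x * g x := by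
  rw [gaussianReal_of_var_ne_zero 0 hv]
  have hm : Measurable fun x => (gaussianPDFReal 0 v x).toNNReal :=
    (measurable_gaussianPDFReal 0 v).real_toNNReal
  have : (volume.withDensity (gaussianPDF 0 v))
      = volume.withDensity (fun x => ((gaussianPDFReal 0 v x).toNNReal : ℝ≥0∞)) := rfl
  rw [this, integral_withDensity_eq_integral_smul hm]
  congr 1; ext x
  rw [NNReal.smul_def, smul_eq_mul, Real.coe_toNNReal _ (gaussianPDFReal_nonneg 0 v x)]

lemma gaussianReal_integrable_iff (v : ℝ≥0) (hv : v ≠ 0) (g : ℝ → ℝ) (hg : Measurable g) :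
    Integrable g (gaussianReal 0 v) ↔ Integrable (fun x => gaussianPDFReal 0 v x * g x) := by
  rw [gaussianReal_of_var_ne_zero 0 hv]
  have hm : Measurable fun x => (gaussianPDFReal 0 v x).toNNReal :=
    (measurable_gaussianPDFReal 0 v).real_toNNReal
  have : (volume.withDensity (gaussianPDF 0 v))
      = volume.withDensity (fun x => ((gaussianPDFReal 0 v x).toNNReal : ℝ≥0∞)) := rfl
  rw [this, integrable_withDensity_iff_integrable_smul hm]
  have heq : ∀ x : ℝ, (gaussianPDFReal 0 v x).toNNReal • g x = gaussianPDFReal 0 v x * g x := by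
    intro x
    rw [NNReal.smul_def, smul_eq_mul, Real.coe_toNNReal _ (gaussianPDFReal_nonneg 0 v x)]
  constructor <;> intro hi
  · exact hi.congr (Eventually.of_forall fun x => heq x)
  · exact hi.congr (Eventually.of_forall fun x => (heq x).symm)

lemma gaussianPDFReal_zero_eq (v : ℝ≥0) (x : ℝ) :
    gaussianPDFReal 0 v x = (Real.sqrt (2 * π * v))⁻¹ * Real.exp (-(2 * (v:ℝ))⁻¹ * x ^ 2) := by
  rw [gaussianPDFReal]
  congr 1
  rw [sub_zero]
  congr 1
  rw [neg_div]
  rw [neg_mul]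
  congr 1
  rw [div_eq_inv_mul]

lemma gaussianReal_sq_integrable (v : ℝ≥0) (hv : v ≠ 0) :
    Integrable (fun x : ℝ => x ^ 2) (gaussianReal 0 v) := by
  have hv0 : (0:ℝ) < v := by positivity
  have hb : (0:ℝ) < (2 * (v:ℝ))⁻¹ := by positivity
  rw [gaussianReal_integrable_iff v hv _ (by measurability)]
  have : Integrable (fun x : ℝ =>
      (Real.sqrt (2 * π * v))⁻¹ * (x ^ 2 * Real.exp (-(2 * (v:ℝ))⁻¹ * x ^ 2))) :=
    (int_sq_exp _ hb).const_mul _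
  refine this.congr (Eventually.of_forall fun x => ?_)
  simp only [gaussianPDFReal_zero_eq]; ring

lemma gaussianReal_sq_moment (v : ℝ≥0) (hv : v ≠ 0) :
    ∫ x : ℝ, x ^ 2 ∂(gaussianReal 0 v) = v := by
  have hv0 : (0:ℝ) < v := by positivity
  have hb : (0:ℝ) < (2 * (v:ℝ))⁻¹ := by positivity
  rw [gaussianReal_integral_eq v hv]
  have h1 : ∀ x : ℝ, gaussianPDFReal 0 v x * x ^ 2
      = (Real.sqrt (2 * π * v))⁻¹ * (x ^ 2 * Real.exp (-(2 * (v:ℝ))⁻¹ * x ^ 2)) := by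
    intro x; rw [gaussianPDFReal_zero_eq]; ring
  simp_rw [h1]
  rw [integral_const_mul, gauss_sq_full _ hb]
  have h2 : (2 * (2 * (v:ℝ))⁻¹)⁻¹ = v := by
    rw [mul_inv, inv_inv]; field_simp
  have h3 : π / (2 * (v:ℝ))⁻¹ = 2 * π * v := by field_simp
  rw [h2, h3]
  rw [← mul_assoc, mul_comm ((Real.sqrt (2 * π * v))⁻¹) (v:ℝ), mul_assoc,
    inv_mul_cancel₀ (by positivity : Real.sqrt (2 * π * v) ≠ 0), mul_one]

lemma gaussianReal_id_integrable (v : ℝ≥0) (hv : v ≠ 0) :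
    Integrable (fun x : ℝ => x) (gaussianReal 0 v) := by
  have hb : (0:ℝ) < (2 * (v:ℝ))⁻¹ := by positivity
  rw [gaussianReal_integrable_iff v hv _ measurable_id']
  have : Integrable (fun x : ℝ =>
      (Real.sqrt (2 * π * v))⁻¹ * (x * Real.exp (-(2 * (v:ℝ))⁻¹ * x ^ 2))) :=
    (integrable_mul_exp_neg_mul_sq hb).const_mul _
  refine this.congr (Eventually.of_forall fun x => ?_)
  simp only [gaussianPDFReal_zero_eq]; ring

lemma gaussianReal_mean_zero (v : ℝ≥0) (hv : v ≠ 0) :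
    ∫ x : ℝ, x ∂(gaussianReal 0 v) = 0 := by
  rw [gaussianReal_integral_eq v hv]
  set f : ℝ → ℝ := fun x => gaussianPDFReal 0 v x * x with hfdef
  have hodd : ∀ x, f (-x) = - f x := by
    intro x
    simp only [hfdef, gaussianPDFReal_zero_eq, neg_sq]
    ring
  have h1 : ∫ x : ℝ, f (-x) = ∫ x : ℝ, f x := integral_neg_eq_self f volume
  have h2 : ∫ x : ℝ, f (-x) = - ∫ x : ℝ, f x := by
    simp_rw [hodd]; exact integral_neg f
  have := h1.symm.trans h2
  linarith

lemma abs_mul_le_half (a b : ℝ) : |a * b| ≤ 1/2 * (a^2 + b^2) := by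
  rw [abs_mul]
  nlinarith [sq_nonneg (|a| - |b|), sq_abs a, sq_abs b]


/-- V-integrability of the tamed Euler scheme for V(x) = |x|². -/
theorem stmt_0
    {Ω : Type*} [MeasurableSpace Ω] (P : Measure Ω) [IsProbabilityMeasure P]
    (T h μ ρ : ℝ) (hT : 0 < T) (hh0 : 0 < h) (hh1 : h ≤ 1) (hμ : 0 < μ) (hρ : 0 < ρ)
    (bh sh : ℝ → ℝ) (hbm : Measurable bh) (hsm : Measurable sh)
    (X ΔW : ℕ → Ω → ℝ)
    (hXm : ∀ k, Measurable (X k))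
    (hWm : ∀ k, Measurable (ΔW k))
    (hlaw : ∀ k, P.map (ΔW (k + 1)) = gaussianReal 0 ⟨h, hh0.le⟩)
    (hindep : ∀ k, IndepFun (fun ω => fun i : Fin (k + 1) => X i ω) (ΔW (k + 1)) P)
    (hscheme : ∀ k ω, X (k + 1) ω = X k ω + bh (X k ω) * h + sh (X k ω) * ΔW (k + 1) ω)
    (hX0 : Integrable (fun ω => (X 0 ω) ^ 2) P)
    (htame1 : ∀ x : ℝ, |bh x| ^ 2 * h ≤ μ * (1 + x ^ 2))
    (htame2 : ∀ x : ℝ, 2 * x * bh x + |sh x| ^ 2 ≤ ρ * (1 + x ^ 2)) :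
    (∀ k, ∫ ω, (1 + (X (k + 1) ω) ^ 2) ∂P ≤ (1 + (ρ + μ) * h) * ∫ ω, (1 + (X k ω) ^ 2) ∂P)
      ∧ ∀ k ≤ ⌊T / h⌋₊, ∫ ω, (X k ω) ^ 2 ∂P
        ≤ Real.exp ((ρ + μ) * T) * ∫ ω, (1 + (X 0 ω) ^ 2) ∂P := by
  set v : ℝ≥0 := ⟨h, hh0.le⟩ with hv
  have hvne : v ≠ 0 := by
    intro hcon
    have : (v : ℝ) = 0 := by rw [hcon]; simp
    rw [hv] at this; change h = 0 at this; linarith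
  -- pointwise bounds
  have hb2 : ∀ x : ℝ, bh x ^ 2 ≤ (μ / h) * (1 + x ^ 2) := by
    intro x
    have := htame1 x
    rw [sq_abs] at this
    rw [div_mul_eq_mul_div, le_div_iff₀ hh0]
    linarith
  have hs2 : ∀ x : ℝ, sh x ^ 2 ≤ (ρ + 1 + μ / h) * (1 + x ^ 2) := by
    intro x
    have h1 := htame2 x
    rw [sq_abs] at h1
    have h2 : -(2 * x * bh x) ≤ x ^ 2 + bh x ^ 2 := by nlinarith [sq_nonneg (x + bh x)]
    have h3 := hb2 x
    have hx : x ^ 2 ≤ 1 + x ^ 2 := by linarith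
    nlinarith
  -- one-step result
  have key : ∀ k, Integrable (fun ω => (X k ω) ^ 2) P →
      Integrable (fun ω => (X (k + 1) ω) ^ 2) P ∧
      ∫ ω, (1 + (X (k + 1) ω) ^ 2) ∂P ≤ (1 + (ρ + μ) * h) * ∫ ω, (1 + (X k ω) ^ 2) ∂P := by
    intro k hXk2
    set A : Ω → ℝ := fun ω => X k ω + bh (X k ω) * h with hA
    set B : Ω → ℝ := fun ω => sh (X k ω) with hB
    set W : Ω → ℝ := ΔW (k + 1) with hW
    have hAm : Measurable A := (hXm k).add ((hbm.comp (hXm k)).mul_const h)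
    have hBm : Measurable B := hsm.comp (hXm k)
    have hWmeas : Measurable W := hWm (k + 1)
    have hone : Integrable (fun ω => 1 + (X k ω) ^ 2) P := (integrable_const 1).add hXk2
    -- integrability of A², B², A*B
    have hA2bound : ∀ ω, A ω ^ 2 ≤ (2 + 2 * μ) * (1 + (X k ω) ^ 2) := by
      intro ω
      simp only [hA]
      have h1 : (X k ω + bh (X k ω) * h) ^ 2 ≤ 2 * (X k ω) ^ 2 + 2 * (bh (X k ω) * h) ^ 2 := by
        nlinarith [sq_nonneg (X k ω - bh (X k ω) * h)]
      have h2 : (bh (X k ω) * h) ^ 2 ≤ μ * (1 + (X k ω) ^ 2) := by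
        have := htame1 (X k ω)
        rw [sq_abs] at this
        have hhh : bh (X k ω) ^ 2 * h * h ≤ μ * (1 + (X k ω) ^ 2) * 1 := by
          apply mul_le_mul this hh1 hh0.le (by positivity)
        nlinarith
      nlinarith [sq_nonneg (X k ω)]
    have hA2int : Integrable (fun ω => A ω ^ 2) P := by
      refine Integrable.mono' (hone.const_mul (2 + 2 * μ)) ((hAm.pow_const 2).aestronglyMeasurable)
        (Eventually.of_forall fun ω => ?_)
      rw [Real.norm_eq_abs, abs_of_nonneg (sq_nonneg _)]
      exact hA2bound ω
    have hB2bound : ∀ ω, B ω ^ 2 ≤ (ρ + 1 + μ / h) * (1 + (X k ω) ^ 2) := fun ω => hs2 (X k ω)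
    have hB2int : Integrable (fun ω => B ω ^ 2) P := by
      refine Integrable.mono' (hone.const_mul (ρ + 1 + μ / h))
        ((hBm.pow_const 2).aestronglyMeasurable) (Eventually.of_forall fun ω => ?_)
      rw [Real.norm_eq_abs, abs_of_nonneg (sq_nonneg _)]
      exact hB2bound ω
    have hABint : Integrable (fun ω => A ω * B ω) P := by
      refine Integrable.mono' ((hA2int.add hB2int).const_mul (1/2))
        ((hAm.mul hBm).aestronglyMeasurable) (Eventually.of_forall fun ω => ?_)
      rw [Real.norm_eq_abs]
      simpa using abs_mul_le_half (A ω) (B ω)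
    -- Gaussian increment: integrability and moments
    have hmap := hlaw k
    have hWint : Integrable W P := by
      have h1 := gaussianReal_id_integrable v hvne
      rw [← hmap] at h1
      exact (integrable_map_measure measurable_id.aestronglyMeasurable
        hWmeas.aemeasurable).mp h1
    have hW2int : Integrable (fun ω => W ω ^ 2) P := by
      have h1 := gaussianReal_sq_integrable v hvne
      rw [← hmap] at h1
      exact (integrable_map_measure (measurable_id.pow_const 2).aestronglyMeasurable
        hWmeas.aemeasurable).mp h1
    have hWmean : ∫ ω, W ω ∂P = 0 := by
      have h1 := integral_map (μ := P) (f := fun x : ℝ => x) hWmeas.aemeasurable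
        measurable_id.aestronglyMeasurable
      rw [hmap, gaussianReal_mean_zero v hvne] at h1
      exact h1.symm
    have hW2mean : ∫ ω, W ω ^ 2 ∂P = h := by
      have h1 := integral_map (μ := P) (f := fun x : ℝ => x ^ 2) hWmeas.aemeasurable
        (measurable_id.pow_const 2).aestronglyMeasurable
      rw [hmap, gaussianReal_sq_moment v hvne] at h1
      exact h1.symm
    -- independence
    have hIk := hindep k
    have hproj : Measurable fun p : Fin (k + 1) → ℝ => p (Fin.last k) :=
      measurable_pi_apply _
    have hIAB : IndepFun (fun ω => A ω * B ω) W P := by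
      have hφ : Measurable fun p : Fin (k + 1) → ℝ =>
          (p (Fin.last k) + bh (p (Fin.last k)) * h) * sh (p (Fin.last k)) :=
        (hproj.add ((hbm.comp hproj).mul_const h)).mul (hsm.comp hproj)
      exact hIk.comp hφ measurable_id
    have hIB2W2 : IndepFun (fun ω => B ω ^ 2) (fun ω => W ω ^ 2) P := by
      have hψ : Measurable fun p : Fin (k + 1) → ℝ => sh (p (Fin.last k)) ^ 2 :=
        (hsm.comp hproj).pow_const 2
      exact hIk.comp hψ (measurable_id.pow_const 2)
    -- integrable products
    have hABWint : Integrable (fun ω => A ω * B ω * W ω) P :=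
      hIAB.integrable_mul hABint hWint
    have hB2W2int : Integrable (fun ω => B ω ^ 2 * W ω ^ 2) P :=
      hIB2W2.integrable_mul hB2int hW2int
    -- decomposition
    have hdecomp : ∀ ω, (X (k + 1) ω) ^ 2
        = A ω ^ 2 + 2 * (A ω * B ω * W ω) + B ω ^ 2 * W ω ^ 2 := by
      intro ω
      rw [hscheme k ω]
      simp only [hA, hB, hW]
      ring
    have hXk12 : Integrable (fun ω => (X (k + 1) ω) ^ 2) P := by
      have h1 : Integrable (fun ω => A ω ^ 2 + 2 * (A ω * B ω * W ω) + B ω ^ 2 * W ω ^ 2) P :=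
        (hA2int.add (hABWint.const_mul 2)).add hB2W2int
      exact h1.congr (Eventually.of_forall fun ω => (hdecomp ω).symm)
    refine ⟨hXk12, ?_⟩
    -- compute the integral
    have hint_eq : ∫ ω, (X (k + 1) ω) ^ 2 ∂P
        = (∫ ω, A ω ^ 2 ∂P) + h * ∫ ω, B ω ^ 2 ∂P := by
      calc ∫ ω, (X (k + 1) ω) ^ 2 ∂P
          = ∫ ω, (A ω ^ 2 + 2 * (A ω * B ω * W ω) + B ω ^ 2 * W ω ^ 2) ∂P :=
            integral_congr_ae (Eventually.of_forall fun ω => hdecomp ω)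
        _ = (∫ ω, (A ω ^ 2 + 2 * (A ω * B ω * W ω)) ∂P) + ∫ ω, B ω ^ 2 * W ω ^ 2 ∂P :=
            integral_add (hA2int.add (hABWint.const_mul 2)) hB2W2int
        _ = (∫ ω, A ω ^ 2 ∂P) + (∫ ω, 2 * (A ω * B ω * W ω) ∂P)
              + ∫ ω, B ω ^ 2 * W ω ^ 2 ∂P := by
            rw [integral_add hA2int (hABWint.const_mul 2)]
        _ = (∫ ω, A ω ^ 2 ∂P) + h * ∫ ω, B ω ^ 2 ∂P := by
            have e1 : ∫ ω, A ω * B ω * W ω ∂P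
                = (∫ ω, A ω * B ω ∂P) * ∫ ω, W ω ∂P :=
              hIAB.integral_fun_mul_eq_mul_integral hABint.1 hWint.1
            have e2 : ∫ ω, B ω ^ 2 * W ω ^ 2 ∂P
                = (∫ ω, B ω ^ 2 ∂P) * ∫ ω, W ω ^ 2 ∂P :=
              hIB2W2.integral_fun_mul_eq_mul_integral hB2int.1 hW2int.1
            rw [integral_const_mul, e1, e2, hWmean, hW2mean]
            ring
    -- pointwise bound on A² + h B²
    have hpt : ∀ ω, A ω ^ 2 + h * B ω ^ 2
        ≤ (X k ω) ^ 2 + (ρ + μ) * h * (1 + (X k ω) ^ 2) := by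
      intro ω
      set x := X k ω with hx
      have e1 : A ω ^ 2 + h * B ω ^ 2
          = x ^ 2 + (2 * x * bh x + sh x ^ 2) * h + bh x ^ 2 * h * h := by
        simp only [hA, hB, ← hx]
        ring
      have h1 : (2 * x * bh x + sh x ^ 2) * h ≤ ρ * (1 + x ^ 2) * h := by
        have := htame2 x
        rw [sq_abs] at this
        exact mul_le_mul_of_nonneg_right this hh0.le
      have h2 : bh x ^ 2 * h * h ≤ μ * (1 + x ^ 2) * h := by
        have := htame1 x
        rw [sq_abs] at this
        exact mul_le_mul_of_nonneg_right this hh0.le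
      rw [e1]
      nlinarith
    have hintineq : (∫ ω, A ω ^ 2 ∂P) + h * ∫ ω, B ω ^ 2 ∂P
        ≤ (∫ ω, (X k ω) ^ 2 ∂P) + (ρ + μ) * h * ∫ ω, (1 + (X k ω) ^ 2) ∂P := by
      have hL : Integrable (fun ω => A ω ^ 2 + h * B ω ^ 2) P :=
        hA2int.add (hB2int.const_mul h)
      have hR : Integrable (fun ω => (X k ω) ^ 2 + (ρ + μ) * h * (1 + (X k ω) ^ 2)) P :=
        hXk2.add (hone.const_mul _)
      have := integral_mono hL hR hpt
      rwa [integral_add hA2int (hB2int.const_mul h), integral_const_mul,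
        integral_add hXk2 (hone.const_mul _), integral_const_mul] at this
    -- conclude
    have hintone : ∀ m : ℕ, Integrable (fun ω => (X m ω) ^ 2) P →
        ∫ ω, (1 + (X m ω) ^ 2) ∂P = 1 + ∫ ω, (X m ω) ^ 2 ∂P := by
      intro m hm
      rw [integral_add (integrable_const 1) hm, integral_const]
      simp
    rw [hintone (k+1) hXk12, hintone k hXk2, mul_add, mul_one]
    have hfinal : ∫ ω, (X (k + 1) ω) ^ 2 ∂P
        ≤ (∫ ω, (X k ω) ^ 2 ∂P) + (ρ + μ) * h * ∫ ω, (1 + (X k ω) ^ 2) ∂P := by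
      rw [hint_eq]; exact hintineq
    rw [hintone k hXk2] at hfinal
    nlinarith [hfinal]
  -- integrability for all k
  have hint : ∀ k, Integrable (fun ω => (X k ω) ^ 2) P := by
    intro k
    induction k with
    | zero => exact hX0
    | succ n ih => exact (key n ih).1
  refine ⟨fun k => (key k (hint k)).2, ?_⟩
  -- iterate
  have hc0 : (0:ℝ) ≤ 1 + (ρ + μ) * h := by positivity
  have hiter : ∀ k : ℕ, ∫ ω, (1 + (X k ω) ^ 2) ∂P
      ≤ (1 + (ρ + μ) * h) ^ k * ∫ ω, (1 + (X 0 ω) ^ 2) ∂P := by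
    intro k
    induction k with
    | zero => simp
    | succ n ih =>
      calc ∫ ω, (1 + (X (n + 1) ω) ^ 2) ∂P
          ≤ (1 + (ρ + μ) * h) * ∫ ω, (1 + (X n ω) ^ 2) ∂P := (key n (hint n)).2
        _ ≤ (1 + (ρ + μ) * h) * ((1 + (ρ + μ) * h) ^ n * ∫ ω, (1 + (X 0 ω) ^ 2) ∂P) :=
            mul_le_mul_of_nonneg_left ih hc0
        _ = (1 + (ρ + μ) * h) ^ (n + 1) * ∫ ω, (1 + (X 0 ω) ^ 2) ∂P := by ring
  intro k hk
  have hI0 : (0:ℝ) ≤ ∫ ω, (1 + (X 0 ω) ^ 2) ∂P :=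
    integral_nonneg fun ω => by positivity
  have hVle : ∫ ω, (X k ω) ^ 2 ∂P ≤ ∫ ω, (1 + (X k ω) ^ 2) ∂P := by
    rw [integral_add (integrable_const 1) (hint k), integral_const]
    simp
  have hpow : (1 + (ρ + μ) * h) ^ k ≤ Real.exp ((ρ + μ) * T) := by
    have h1 : (1 + (ρ + μ) * h) ^ k ≤ Real.exp ((ρ + μ) * h) ^ k := by
      apply pow_le_pow_left₀ hc0
      have := Real.add_one_le_exp ((ρ + μ) * h)
      linarith
    have h2 : Real.exp ((ρ + μ) * h) ^ k = Real.exp ((ρ + μ) * h * k) := by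
      rw [← Real.exp_nat_mul]; ring_nf
    have h3 : (ρ + μ) * h * k ≤ (ρ + μ) * T := by
      have hk' : (k : ℝ) ≤ T / h := by
        calc (k : ℝ) ≤ (⌊T / h⌋₊ : ℝ) := Nat.cast_le.mpr hk
          _ ≤ T / h := Nat.floor_le (by positivity)
      have : h * (k:ℝ) ≤ T := by
        rw [← le_div_iff₀' hh0] at *
        linarith [hk']
      have hρμ : (0:ℝ) ≤ ρ + μ := by positivity
      calc (ρ + μ) * h * (k:ℝ) = (ρ + μ) * (h * k) := by ring
        _ ≤ (ρ + μ) * T := mul_le_mul_of_nonneg_left this hρμ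
    calc (1 + (ρ + μ) * h) ^ k ≤ Real.exp ((ρ + μ) * h) ^ k := h1
      _ = Real.exp ((ρ + μ) * h * k) := h2
      _ ≤ Real.exp ((ρ + μ) * T) := Real.exp_le_exp.mpr h3
  calc ∫ ω, (X k ω) ^ 2 ∂P ≤ ∫ ω, (1 + (X k ω) ^ 2) ∂P := hVle
    _ ≤ (1 + (ρ + μ) * h) ^ k * ∫ ω, (1 + (X 0 ω) ^ 2) ∂P := hiter k
    _ ≤ Real.exp ((ρ + μ) * T) * ∫ ω, (1 + (X 0 ω) ^ 2) ∂P :=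
        mul_le_mul_of_nonneg_right hpow hI0
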